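/- Let X = G⟨c⟩ with G = ⟨a,b⟩ ∈ {D_{2n}, Q_{4n}}, G ∩ ⟨c⟩ = 1, ⟨c⟩_X = 1, and suppose ⟨a⟩ ⊴ X and ⟨a⟩⟨c⟩ is a subgroup of X. Then G ⊴ X. -/

import Mathlib

open scoped Pointwise

private lemma zpow_of_sq_eq_one {Y : Type*} [Group Y] {x : Y} (h : x ^ 2 = 1) (s : ℤ) :
    x ^ s = 1 ∨ x ^ s = x := by
  have h' : x ^ (2 : ℤ) = 1 := by exact_mod_cast h
  rcases Int.even_or_odd s with ⟨r, hr⟩ | ⟨r, hr⟩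
  · left; rw [hr, ← two_mul, zpow_mul, h', one_zpow]
  · right; rw [hr, zpow_add, zpow_one, zpow_mul, h', one_zpow, one_mul]

/-- If `X = G⟨c⟩` with `G` dihedral or generalized quaternion, `⟨c⟩` core-free,
`⟨a⟩ ⊴ X` and `⟨a⟩⟨c⟩` a subgroup, then `G ⊴ X`. -/
theorem normal_G_of_normal_zpowers_a {X : Type*} [Group X] [Finite X]
    (n : ℕ) (hn : 2 ≤ n) (a b c : X) (G : Subgroup X)
    (hGgen : G = Subgroup.closure {a, b})
    (hrel : b * a * b⁻¹ = a⁻¹)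
    (hGtype : (orderOf a = n ∧ orderOf b = 2 ∧ Nat.card G = 2 * n) ∨
      (orderOf a = 2 * n ∧ b ^ 2 = a ^ n ∧ Nat.card G = 4 * n))
    (hint : G ⊓ Subgroup.zpowers c = ⊥)
    (hfact : ∀ x : X, ∃ g ∈ G, ∃ k : ℤ, x = g * c ^ k)
    (hcore : (Subgroup.zpowers c).normalCore = ⊥)
    (hanormal : (Subgroup.zpowers a).Normal)
    (hM : ∃ M : Subgroup X,
      (M : Set X) = (Subgroup.zpowers a : Set X) * (Subgroup.zpowers c : Set X)) :
    G.Normal := by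
  classical
  obtain ⟨M, hMset⟩ := hM
  have haG : a ∈ G := by
    rw [hGgen]; exact Subgroup.subset_closure (by simp)
  have hbG : b ∈ G := by
    rw [hGgen]; exact Subgroup.subset_closure (by simp)
  have hAG : Subgroup.zpowers a ≤ G := Subgroup.zpowers_le.mpr haG
  have hrel2 : b⁻¹ * a * b = a⁻¹ := by
    have h1 : b⁻¹ * a⁻¹ * b = a := by rw [← hrel]; group
    calc b⁻¹ * a * b = (b⁻¹ * a⁻¹ * b)⁻¹ := by group
      _ = a⁻¹ := by rw [h1]
  -- b inverts every element of ⟨a⟩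
  have binv : ∀ x ∈ Subgroup.zpowers a, b * x * b⁻¹ = x⁻¹ := by
    intro x hx
    obtain ⟨t, rfl⟩ := Subgroup.mem_zpowers_iff.mp hx
    rw [← conj_zpow, hrel, inv_zpow]
  -- elements of ⟨a⟩ commute
  have Acomm : ∀ x ∈ Subgroup.zpowers a, ∀ y ∈ Subgroup.zpowers a, x * y = y * x := by
    intro x hx y hy
    obtain ⟨s, rfl⟩ := Subgroup.mem_zpowers_iff.mp hx
    obtain ⟨t, rfl⟩ := Subgroup.mem_zpowers_iff.mp hy
    rw [← zpow_add, ← zpow_add, add_comm]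
  have Ccomm : ∀ x ∈ Subgroup.zpowers c, ∀ y ∈ Subgroup.zpowers c, x * y = y * x := by
    intro x hx y hy
    obtain ⟨s, rfl⟩ := Subgroup.mem_zpowers_iff.mp hx
    obtain ⟨t, rfl⟩ := Subgroup.mem_zpowers_iff.mp hy
    rw [← zpow_add, ← zpow_add, add_comm]
  -- cardinalities
  have hqpos : 0 < Nat.card (Subgroup.zpowers a) := Nat.card_pos
  have hmpos : 0 < Nat.card (Subgroup.zpowers c) := Nat.card_pos
  have cardX : Nat.card X = Nat.card G * Nat.card (Subgroup.zpowers c) := by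
    have hb : Function.Bijective
        (fun p : G × Subgroup.zpowers c => (p.1 : X) * (p.2 : X)) := by
      constructor
      · rintro ⟨g₁, y₁⟩ ⟨g₂, y₂⟩ h
        simp only at h
        have hm' : (g₂ : X)⁻¹ * g₁ = (y₂ : X) * (y₁ : X)⁻¹ := by
          have h5 : (g₂ : X)⁻¹ * g₁ * y₁ = (y₂ : X) * (y₁ : X)⁻¹ * y₁ := by
            rw [mul_assoc, h]; group
          exact mul_right_cancel h5
        have hyC : (y₂ : X) * (y₁ : X)⁻¹ ∈ Subgroup.zpowers c :=
          mul_mem y₂.2 (inv_mem y₁.2)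
        have hgG : (g₂ : X)⁻¹ * (g₁ : X) ∈ G := mul_mem (inv_mem g₂.2) g₁.2
        have h3 : (g₂ : X)⁻¹ * g₁ ∈ G ⊓ Subgroup.zpowers c :=
          Subgroup.mem_inf.mpr ⟨hgG, hm' ▸ hyC⟩
        rw [hint, Subgroup.mem_bot] at h3
        have h4 : (g₂ : X) = g₁ := by
          rw [← inv_mul_eq_one]; exact h3
        have h6 : (y₂ : X) = y₁ := by
          rw [← mul_inv_eq_one, ← hm', h3]
        exact Prod.ext (Subtype.ext h4.symm) (Subtype.ext h6.symm)
      · intro x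
        obtain ⟨g, hg, k, rfl⟩ := hfact x
        exact ⟨(⟨g, hg⟩, ⟨c ^ k, zpow_mem (Subgroup.mem_zpowers c) k⟩), rfl⟩
    calc Nat.card X = Nat.card (G × Subgroup.zpowers c) :=
          (Nat.card_eq_of_bijective _ hb).symm
      _ = Nat.card G * Nat.card (Subgroup.zpowers c) := Nat.card_prod _ _
  have cardM : Nat.card M = Nat.card (Subgroup.zpowers a) * Nat.card (Subgroup.zpowers c) := by
    have hb : Function.Bijective
        (fun p : Subgroup.zpowers a × Subgroup.zpowers c =>
          (⟨(p.1 : X) * (p.2 : X), by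
            rw [← SetLike.mem_coe, hMset]
            exact Set.mul_mem_mul p.1.2 p.2.2⟩ : M)) := by
      constructor
      · rintro ⟨x₁, y₁⟩ ⟨x₂, y₂⟩ h
        simp only [Subtype.mk.injEq] at h
        have hm' : (x₂ : X)⁻¹ * x₁ = (y₂ : X) * (y₁ : X)⁻¹ := by
          have h5 : (x₂ : X)⁻¹ * x₁ * y₁ = (y₂ : X) * (y₁ : X)⁻¹ * y₁ := by
            rw [mul_assoc, h]; group
          exact mul_right_cancel h5
        have hyC : (y₂ : X) * (y₁ : X)⁻¹ ∈ Subgroup.zpowers c :=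
          mul_mem y₂.2 (inv_mem y₁.2)
        have hgG : (x₂ : X)⁻¹ * (x₁ : X) ∈ Subgroup.zpowers a :=
          mul_mem (inv_mem x₂.2) x₁.2
        have h3 : (x₂ : X)⁻¹ * x₁ ∈ G ⊓ Subgroup.zpowers c :=
          Subgroup.mem_inf.mpr ⟨hAG hgG, hm' ▸ hyC⟩
        rw [hint, Subgroup.mem_bot] at h3
        have h4 : (x₂ : X) = x₁ := by rw [← inv_mul_eq_one]; exact h3
        have h6 : (y₂ : X) = y₁ := by rw [← mul_inv_eq_one, ← hm', h3]
        exact Prod.ext (Subtype.ext h4.symm) (Subtype.ext h6.symm)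
      · rintro ⟨x, hx⟩
        have hx' : x ∈ (Subgroup.zpowers a : Set X) * (Subgroup.zpowers c : Set X) := by
          rw [← hMset]; exact hx
        obtain ⟨u, hu, v, hv, huv⟩ := hx'
        exact ⟨(⟨u, hu⟩, ⟨v, hv⟩), Subtype.ext huv⟩
    calc Nat.card M = Nat.card (Subgroup.zpowers a × Subgroup.zpowers c) :=
          (Nat.card_eq_of_bijective _ hb).symm
      _ = _ := Nat.card_prod _ _
  have cardG2 : Nat.card G = 2 * Nat.card (Subgroup.zpowers a) := by
    rcases hGtype with ⟨h1, _, h3⟩ | ⟨h1, _, h3⟩ <;>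
      rw [Nat.card_zpowers, h1, h3] <;> ring
  have hidx : M.index = 2 := by
    have h := Subgroup.card_mul_index M
    rw [cardM, cardX, cardG2] at h
    have hpos : 0 < Nat.card (Subgroup.zpowers a) * Nat.card (Subgroup.zpowers c) :=
      Nat.mul_pos hqpos hmpos
    apply Nat.eq_of_mul_eq_mul_left hpos
    rw [h]; ring
  have hcM : c ∈ M := by
    have h1 : (1 : X) * c ∈ (Subgroup.zpowers a : Set X) * (Subgroup.zpowers c : Set X) :=
      Set.mul_mem_mul (Subgroup.zpowers a).one_mem (Subgroup.mem_zpowers c)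
    rw [← SetLike.mem_coe, hMset]
    simpa using h1
  have hbcbM : b * c * b⁻¹ ∈ M := by
    rw [Subgroup.mul_mem_iff_of_index_two hidx, Subgroup.mul_mem_iff_of_index_two hidx,
      inv_mem_iff]
    tauto
  have hbcb' : b * c * b⁻¹ ∈ (Subgroup.zpowers a : Set X) * (Subgroup.zpowers c : Set X) := by
    rw [← hMset]; exact hbcbM
  obtain ⟨α, hα, γ, hγ, hdec0⟩ := hbcb'
  have hdec : α * γ = b * c * b⁻¹ := hdec0
  have hα' : α ∈ Subgroup.zpowers a := hα
  have hγ' : γ ∈ Subgroup.zpowers c := hγ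
  -- key conjugation identity
  have hyA : c * a * c⁻¹ ∈ Subgroup.zpowers a :=
    hanormal.conj_mem a (Subgroup.mem_zpowers a) c
  have hgA : γ * a * γ⁻¹ ∈ Subgroup.zpowers a :=
    hanormal.conj_mem a (Subgroup.mem_zpowers a) γ
  have e1 : (α * γ) * a * (α * γ)⁻¹ = c * a * c⁻¹ := by
    rw [hdec]
    have s1 : (b * c * b⁻¹) * a * (b * c * b⁻¹)⁻¹ = b * (c * (b⁻¹ * a * b) * c⁻¹) * b⁻¹ := by
      group
    rw [s1, hrel2]
    have s2 : c * a⁻¹ * c⁻¹ = (c * a * c⁻¹)⁻¹ := by group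
    rw [s2]
    have h7 := binv _ (inv_mem hyA)
    rw [inv_inv] at h7
    exact h7
  have key1 : γ * a * γ⁻¹ = c * a * c⁻¹ := by
    have e2 : (α * γ) * a * (α * γ)⁻¹ = α * (γ * a * γ⁻¹) * α⁻¹ := by group
    have e3 : α * (γ * a * γ⁻¹) * α⁻¹ = γ * a * γ⁻¹ := by
      rw [Acomm α hα' _ hgA]; group
    rw [← e3, ← e2, e1]
  have key1' : ∀ x ∈ Subgroup.zpowers a, γ * x * γ⁻¹ = c * x * c⁻¹ := by
    intro x hx
    obtain ⟨t, rfl⟩ := Subgroup.mem_zpowers_iff.mp hx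
    rw [← conj_zpow, ← conj_zpow, key1]
  set z := γ * c⁻¹ with hz
  have hzC : z ∈ Subgroup.zpowers c :=
    mul_mem hγ' (inv_mem (Subgroup.mem_zpowers c))
  have zcommA : ∀ x ∈ Subgroup.zpowers a, z * x = x * z := by
    intro x hx
    have h1 : c⁻¹ * x * c ∈ Subgroup.zpowers a := by
      have := hanormal.conj_mem x hx c⁻¹
      simpa using this
    have h2 : γ * (c⁻¹ * x * c) * γ⁻¹ = c * (c⁻¹ * x * c) * c⁻¹ := key1' _ h1
    have h3 : z * x * z⁻¹ = x := by
      calc z * x * z⁻¹ = γ * (c⁻¹ * x * c) * γ⁻¹ := by rw [hz]; group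
        _ = c * (c⁻¹ * x * c) * c⁻¹ := h2
        _ = x := by group
    calc z * x = (z * x * z⁻¹) * z := by group
      _ = x * z := by rw [h3]
  -- b² commutes with c
  have hb2c : b ^ 2 * c = c * b ^ 2 := by
    rcases hGtype with ⟨hoa, hob, _⟩ | ⟨hoa, hb2, _⟩
    · have h1 : b ^ 2 = 1 := by rw [← hob]; exact pow_orderOf_eq_one b
      rw [h1]; group
    · have hu2 : ((a : X) ^ n) ^ 2 = 1 := by
        rw [← pow_mul, mul_comm, ← hoa, pow_orderOf_eq_one]
      have hune : (a : X) ^ n ≠ 1 := by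
        intro h
        have hdvd := orderOf_dvd_of_pow_eq_one h
        rw [hoa] at hdvd
        have hn0 : 0 < n := by omega
        have := Nat.le_of_dvd hn0 hdvd
        omega
      have huA : (a : X) ^ n ∈ Subgroup.zpowers a := by
        exact ⟨(n : ℤ), by simp⟩
      have hvA : c * a ^ n * c⁻¹ ∈ Subgroup.zpowers a := hanormal.conj_mem _ huA c
      obtain ⟨t, ht⟩ := Subgroup.mem_zpowers_iff.mp hvA
      have hv2 : (c * a ^ n * c⁻¹) ^ 2 = 1 := by
        have h8 : (c * a ^ n * c⁻¹) ^ 2 = c * (a ^ n) ^ 2 * c⁻¹ := by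
          rw [pow_two, pow_two]; group
        rw [h8, hu2]; group
      have hvne : c * a ^ n * c⁻¹ ≠ 1 := by
        intro h
        apply hune
        have h9 : a ^ n = c⁻¹ * (c * a ^ n * c⁻¹) * c := by group
        rw [h9, h]; group
      -- t is a multiple of n
      have hd : ((orderOf a : ℤ)) ∣ 2 * t := by
        rw [orderOf_dvd_iff_zpow_eq_one, mul_comm, zpow_mul, ht]
        exact_mod_cast hv2
      rw [hoa] at hd
      have hnd : (n : ℤ) ∣ t := by
        obtain ⟨s, hs⟩ := hd
        refine ⟨s, ?_⟩
        push_cast at hs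
        linarith
      obtain ⟨s, hs⟩ := hnd
      have hv : c * a ^ n * c⁻¹ = ((a : X) ^ n) ^ s := by
        rw [← ht, hs, zpow_mul, zpow_natCast]
      have hveq : c * a ^ n * c⁻¹ = a ^ n := by
        rcases zpow_of_sq_eq_one hu2 s with h | h
        · exact absurd (hv.trans h) hvne
        · exact hv.trans h
      have h10 : c * a ^ n = a ^ n * c := by
        calc c * a ^ n = (c * a ^ n * c⁻¹) * c := by group
          _ = a ^ n * c := by rw [hveq]
      rw [hb2]
      exact h10.symm
  have keyb2 : b * (b * c * b⁻¹) * b⁻¹ = c := by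
    have h1 : b * (b * c * b⁻¹) * b⁻¹ = b ^ 2 * c * (b ^ 2)⁻¹ := by
      rw [pow_two]; group
    rw [h1, hb2c]; group
  obtain ⟨j, hγj⟩ := Subgroup.mem_zpowers_iff.mp hγ'
  have bconjγ : b * γ * b⁻¹ = (α * γ) ^ j := by
    conv_lhs => rw [← hγj]
    rw [← conj_zpow, ← hdec]
  have maineq : α⁻¹ * (α * γ) ^ j = c := by
    have h1 : b * (α * γ) * b⁻¹ = c := by rw [hdec]; exact keyb2
    have h2 : b * (α * γ) * b⁻¹ = (b * α * b⁻¹) * (b * γ * b⁻¹) := by group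
    rw [h2, binv α hα', bconjγ] at h1
    exact h1
  have hzα : z * α = α * z := zcommA α hα'
  have hzc : z * c = c * z := Ccomm z hzC c (Subgroup.mem_zpowers c)
  have hγzc : γ = z * c := by rw [hz]; group
  have hαγ : α * γ = z * (α * c) := by
    rw [hγzc, ← mul_assoc, ← hzα, mul_assoc]
  have hc1 : Commute z (α * c) := (Commute.mul_right (hzα) (hzc) : _)
  have hpow : ∀ t : ℤ, (α * γ) ^ t = z ^ t * (α * c) ^ t := by
    intro t; rw [hαγ]; exact hc1.mul_zpow t
  have step : z ^ j * (α * c) ^ (j - 1) = 1 := by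
    have h1 : α⁻¹ * (z ^ j * (α * c) ^ j) = c := by rw [← hpow]; exact maineq
    have h2 : (α * c) ^ j = (α * c) ^ (j - 1) * (α * c) := by
      rw [← zpow_add_one, sub_add_cancel]
    rw [h2] at h1
    have h3 : α⁻¹ * (z ^ j * ((α * c) ^ (j - 1) * (α * c))) =
        (α⁻¹ * (z ^ j * (α * c) ^ (j - 1)) * α) * c := by group
    rw [h3] at h1
    have h4 : α⁻¹ * (z ^ j * (α * c) ^ (j - 1)) * α = 1 :=
      mul_right_cancel (h1.trans (one_mul c).symm)
    calc z ^ j * (α * c) ^ (j - 1)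
        = α * (α⁻¹ * (z ^ j * (α * c) ^ (j - 1)) * α) * α⁻¹ := by group
      _ = 1 := by rw [h4]; group
  have hw : (α * c) ^ (j - 1) = (z ^ j)⁻¹ := by
    calc (α * c) ^ (j - 1) = (z ^ j)⁻¹ * (z ^ j * (α * c) ^ (j - 1)) := by group
      _ = (z ^ j)⁻¹ := by rw [step]; group
  have bzb : b * z * b⁻¹ = z⁻¹ := by
    have h1 : b * z * b⁻¹ = (b * γ * b⁻¹) * (b * c * b⁻¹)⁻¹ := by rw [hz]; group
    rw [h1, bconjγ, ← hdec]
    have h2 : (α * γ) ^ j * (α * γ)⁻¹ = (α * γ) ^ (j - 1) := (zpow_sub_one _ j).symm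
    rw [h2, hpow (j - 1), hw, ← zpow_neg, ← zpow_add,
      show j - 1 + -j = -1 by ring, zpow_neg_one]
  -- ⟨z⟩ is normal in X
  have hnormalizer : ∀ g : X, g * z * g⁻¹ ∈ Subgroup.zpowers z →
      g⁻¹ * z * g ∈ Subgroup.zpowers z → g ∈ Subgroup.normalizer (Subgroup.zpowers z : Set X) := by
    intro g h1 h2
    rw [Subgroup.mem_normalizer_iff]
    intro h
    constructor
    · intro hh
      obtain ⟨t, rfl⟩ := Subgroup.mem_zpowers_iff.mp hh
      obtain ⟨s, hs⟩ := Subgroup.mem_zpowers_iff.mp h1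
      have h3 : g * z ^ t * g⁻¹ = (g * z * g⁻¹) ^ t := conj_zpow.symm
      rw [h3, ← hs]
      exact Subgroup.mem_zpowers_iff.mpr ⟨s * t, zpow_mul z s t⟩
    · intro hmem
      obtain ⟨t, ht⟩ := Subgroup.mem_zpowers_iff.mp hmem
      obtain ⟨s, hs⟩ := Subgroup.mem_zpowers_iff.mp h2
      have h5 : h = g⁻¹ * (g * h * g⁻¹) * g := by group
      rw [h5, ← ht]
      have h6 : g⁻¹ * z ^ t * g = (g⁻¹ * z * g) ^ t := by
        have h7 := conj_zpow (i := t) (a := g⁻¹) (b := z)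
        rw [inv_inv] at h7
        exact h7.symm
      rw [h6, ← hs]
      exact Subgroup.mem_zpowers_iff.mpr ⟨s * t, zpow_mul z s t⟩
  have hznormal : (Subgroup.zpowers z).Normal := by
    rw [← Subgroup.normalizer_eq_top_iff, eq_top_iff]
    rintro x -
    obtain ⟨g, hg, k, rfl⟩ := hfact x
    have hGle : G ≤ Subgroup.normalizer (Subgroup.zpowers z : Set X) := by
      rw [hGgen, Subgroup.closure_le]
      intro x hx
      simp only [Set.mem_insert_iff, Set.mem_singleton_iff] at hx
      rcases hx with rfl | rfl
      · apply hnormalizer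
        · have hza : z * x = x * z := zcommA x (Subgroup.mem_zpowers x)
          have h8 : x * z * x⁻¹ = z := by rw [← hza]; group
          rw [h8]; exact Subgroup.mem_zpowers z
        · have hza : z * x = x * z := zcommA x (Subgroup.mem_zpowers x)
          have h8 : x⁻¹ * z * x = z := by rw [mul_assoc, hza]; group
          rw [h8]; exact Subgroup.mem_zpowers z
      · apply hnormalizer
        · rw [bzb]; exact inv_mem (Subgroup.mem_zpowers z)
        · have h2' : x⁻¹ * z⁻¹ * x = z := by rw [← bzb]; group
          have h1' : x⁻¹ * z * x = z⁻¹ := by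
            calc x⁻¹ * z * x = (x⁻¹ * z⁻¹ * x)⁻¹ := by group
              _ = z⁻¹ := by rw [h2']
          rw [h1']; exact inv_mem (Subgroup.mem_zpowers z)
    have hcn : c ∈ Subgroup.normalizer (Subgroup.zpowers z : Set X) := by
      apply hnormalizer
      · have h8 : c * z * c⁻¹ = z := by rw [← hzc]; group
        rw [h8]; exact Subgroup.mem_zpowers z
      · have h8 : c⁻¹ * z * c = z := by rw [mul_assoc, hzc]; group
        rw [h8]; exact Subgroup.mem_zpowers z
    exact mul_mem (hGle hg) (zpow_mem hcn k)
  have hz1 : z = 1 := by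
    have hle : Subgroup.zpowers z ≤ (Subgroup.zpowers c).normalCore := by
      haveI := hznormal
      exact Subgroup.normal_le_normalCore.mpr (Subgroup.zpowers_le.mpr hzC)
    rw [hcore] at hle
    have := hle (Subgroup.mem_zpowers z)
    simpa using this
  have hγc : γ = c := by
    have h1 : γ * c⁻¹ = 1 := by rw [← hz]; exact hz1
    exact mul_inv_eq_one.mp h1
  have hbcb : b * c * b⁻¹ = α * c := by rw [← hdec, hγc]
  have hαG : α ∈ G := hAG hα'
  -- conjugates of b by c and c⁻¹
  have hconj1 : c * b * c⁻¹ = α⁻¹ * b := by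
    have hh : α * c * b = b * c := by rw [← hbcb]; group
    have h1 : α * (c * b * c⁻¹) = b := by
      calc α * (c * b * c⁻¹) = (α * c * b) * c⁻¹ := by group
        _ = (b * c) * c⁻¹ := by rw [hh]
        _ = b := by group
    calc c * b * c⁻¹ = α⁻¹ * (α * (c * b * c⁻¹)) := by group
      _ = α⁻¹ * b := by rw [h1]
  have hconj2 : c⁻¹ * b * c = (c⁻¹ * α * c) * b := by
    have h1 : c⁻¹ * (α⁻¹ * b) * c = b := by rw [← hconj1]; group
    calc c⁻¹ * b * c = (c⁻¹ * α * c) * (c⁻¹ * (α⁻¹ * b) * c) := by group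
      _ = (c⁻¹ * α * c) * b := by rw [h1]
  -- c normalizes G
  have fwd : ∀ h ∈ G, c * h * c⁻¹ ∈ G := by
    intro h hh
    have hmap : G.map (MulAut.conj c).toMonoidHom ≤ G := by
      conv_lhs => rw [hGgen]
      rw [MonoidHom.map_closure, Subgroup.closure_le]
      rintro x ⟨y, hy, rfl⟩
      simp only [Set.mem_insert_iff, Set.mem_singleton_iff] at hy
      rcases hy with rfl | rfl
      · show (MulAut.conj c).toMonoidHom y ∈ (G : Set X)
        simp only [MulEquiv.coe_toMonoidHom, MulAut.conj_apply, SetLike.mem_coe]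
        exact hAG (hanormal.conj_mem y (Subgroup.mem_zpowers y) c)
      · show (MulAut.conj c).toMonoidHom y ∈ (G : Set X)
        simp only [MulEquiv.coe_toMonoidHom, MulAut.conj_apply, SetLike.mem_coe]
        rw [hconj1]
        exact mul_mem (inv_mem hαG) hbG
    have : (MulAut.conj c).toMonoidHom h ∈ G.map (MulAut.conj c).toMonoidHom :=
      Subgroup.mem_map_of_mem _ hh
    have h2 := hmap this
    simpa [MulAut.conj_apply] using h2
  have bwd : ∀ h ∈ G, c⁻¹ * h * c ∈ G := by
    intro h hh
    have hmap : G.map (MulAut.conj c⁻¹).toMonoidHom ≤ G := by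
      conv_lhs => rw [hGgen]
      rw [MonoidHom.map_closure, Subgroup.closure_le]
      rintro x ⟨y, hy, rfl⟩
      simp only [Set.mem_insert_iff, Set.mem_singleton_iff] at hy
      rcases hy with rfl | rfl
      · show (MulAut.conj c⁻¹).toMonoidHom y ∈ (G : Set X)
        simp only [MulEquiv.coe_toMonoidHom, MulAut.conj_apply, SetLike.mem_coe, inv_inv]
        exact hAG (by simpa using hanormal.conj_mem y (Subgroup.mem_zpowers y) c⁻¹)
      · show (MulAut.conj c⁻¹).toMonoidHom y ∈ (G : Set X)
        simp only [MulEquiv.coe_toMonoidHom, MulAut.conj_apply, SetLike.mem_coe, inv_inv]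
        rw [hconj2]
        exact mul_mem (hAG (by simpa using hanormal.conj_mem α hα' c⁻¹)) hbG
    have : (MulAut.conj c⁻¹).toMonoidHom h ∈ G.map (MulAut.conj c⁻¹).toMonoidHom :=
      Subgroup.mem_map_of_mem _ hh
    have h2 := hmap this
    simpa [MulAut.conj_apply] using h2
  have hcn : c ∈ Subgroup.normalizer (G : Set X) := by
    rw [Subgroup.mem_normalizer_iff]
    intro h
    constructor
    · exact fwd h
    · intro hch
      have h3 := bwd _ hch
      have h4 : c⁻¹ * (c * h * c⁻¹) * c = h := by group
      rwa [h4] at h3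
  have htop : Subgroup.normalizer (G : Set X) = ⊤ := by
    rw [eq_top_iff]
    rintro x -
    obtain ⟨g, hg, k, rfl⟩ := hfact x
    exact mul_mem (Subgroup.le_normalizer hg) (zpow_mem hcn k)
  exact Subgroup.normalizer_eq_top_iff.mp htop
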